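/- Let G = (V,E) be an undirected graph with polymatroid capacities ρ_v : Set(E(v)) → [0,∞), where each ρ_v is monotone and submodular, and demands dem : V × V → [0,∞). For any subset S ⊆ E of edges, define ν(S) = min over valid assignments g : S → V (mapping each edge to one of its endpoints) of Σ_v ρ_v(g⁻¹(v)), and let σ_S(x,y) = 1 if x and y lie in different connected components of (V, E \ S), else 0. Then the maximum concurrent flow value mcf_G(ρ, dem) is at most ν(S) / Σ_{u,v} dem(u,v)·σ_S(u,v) whenever the denominator is positive. -/

import Mathlib

open Classical in
/-- Cut upper bound for maximum concurrent flow in polymatroid networks: if a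
multicommodity flow `f` routes `ε·dem(u,v)` between every pair `(u,v)` feasibly with
respect to the polymatroid capacities `ρ_v`, then for every edge set `S` with positive
separated demand `D`, and every valid assignment `g` of the edges of `S` to their
endpoints, `ε ≤ (Σ_v ρ_v(g⁻¹(v))) / D`. -/
theorem mcf_le_sparsity {V : Type*} [Fintype V] [DecidableEq V]
    (G : SimpleGraph V) [DecidableRel G.Adj]
    (ρ : V → Finset (Sym2 V) → ℝ)
    (hρ0 : ∀ v, ρ v ∅ = 0)
    (hρmono : ∀ v (A B : Finset (Sym2 V)), A ⊆ B → ρ v A ≤ ρ v B)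
    (hρsub : ∀ v (A B : Finset (Sym2 V)), ρ v (A ∪ B) + ρ v (A ∩ B) ≤ ρ v A + ρ v B)
    (dem : V → V → ℝ) (hdem : ∀ u v, 0 ≤ dem u v)
    (ε : ℝ) (hε : 0 ≤ ε)
    -- the flow: a nonnegative amount on each simple path, for each commodity
    (f : ∀ u v : V, G.Path u v → ℝ) (hf : ∀ u v p, 0 ≤ f u v p)
    -- it routes an `ε` fraction of every demand
    (hroute : ∀ u v : V, ∑ p : G.Path u v, f u v p = ε * dem u v)
    -- the total flow through each edge
    (φ : Sym2 V → ℝ)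
    (hφ : ∀ e : Sym2 V, φ e =
      ∑ u : V, ∑ v : V, ∑ p : G.Path u v,
        if e ∈ (p : G.Walk u v).edges then f u v p else 0)
    -- feasibility with respect to the polymatroid capacities
    (hfeas : ∀ (v : V) (T : Finset (Sym2 V)),
      (∀ e ∈ T, e ∈ G.edgeFinset ∧ v ∈ e) → ∑ e ∈ T, φ e ≤ ρ v T)
    -- an edge cut `S`, a valid assignment `g`, and the separated demand `D`
    (S : Finset (Sym2 V)) (hS : S ⊆ G.edgeFinset)
    (g : Sym2 V → V) (hg : ∀ e ∈ S, g e ∈ e)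
    (D : ℝ)
    (hD : D = ∑ u : V, ∑ v : V,
      dem u v * (if (G.deleteEdges ↑S).Reachable u v then 0 else 1))
    (hDpos : 0 < D) :
    ε ≤ (∑ v : V, ρ v (S.filter (fun e => g e = v))) / D := by

  rw [le_div_iff₀ hDpos]
  have key : ε * D ≤ ∑ e ∈ S, φ e := by
    have hDeq : ε * D = ∑ u : V, ∑ v : V,
        (if (G.deleteEdges ↑S).Reachable u v then 0 else ∑ p : G.Path u v, f u v p) := by
      rw [hD, Finset.mul_sum]
      refine Finset.sum_congr rfl fun u _ => ?_
      rw [Finset.mul_sum]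
      refine Finset.sum_congr rfl fun v _ => ?_
      rw [hroute]
      split_ifs <;> ring
    have hφS : ∑ e ∈ S, φ e = ∑ u : V, ∑ v : V, ∑ p : G.Path u v,
        ∑ e ∈ S, if e ∈ (p : G.Walk u v).edges then f u v p else 0 := by
      rw [Finset.sum_congr rfl fun e _ => hφ e, Finset.sum_comm]
      refine Finset.sum_congr rfl fun u _ => ?_
      rw [Finset.sum_comm]
      refine Finset.sum_congr rfl fun v _ => ?_
      rw [Finset.sum_comm]
    rw [hDeq, hφS]
    refine Finset.sum_le_sum fun u _ => Finset.sum_le_sum fun v _ => ?_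
    split_ifs with hreach
    · refine Finset.sum_nonneg fun p _ => Finset.sum_nonneg fun e _ => ?_
      split_ifs
      · exact hf u v p
      · exact le_rfl
    · refine Finset.sum_le_sum fun p _ => ?_
      obtain ⟨e0, he0p, he0S⟩ : ∃ e0 ∈ (p : G.Walk u v).edges, e0 ∈ S := by
        by_contra hcon
        push_neg at hcon
        exact hreach ((SimpleGraph.Walk.toDeleteEdges (↑S) (p : G.Walk u v)
          (fun e he => hcon e he)).reachable)
      calc f u v p = (if e0 ∈ (p : G.Walk u v).edges then f u v p else 0) := by
              rw [if_pos he0p]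
        _ ≤ ∑ e ∈ S, if e ∈ (p : G.Walk u v).edges then f u v p else 0 := by
              refine Finset.single_le_sum (f := fun e => if e ∈ (p : G.Walk u v).edges then f u v p else 0) (fun e _ => ?_) he0S
              try simp only []
              split_ifs
              · exact hf u v p
              · exact le_rfl
  refine key.trans ?_
  have hpart : ∑ e ∈ S, φ e = ∑ v : V, ∑ e ∈ S.filter (fun e => g e = v), φ e := by
    rw [Finset.sum_fiberwise_eq_sum_filter S Finset.univ g φ]
    simp
  rw [hpart]
  refine Finset.sum_le_sum fun v _ => ?_
  refine hfeas v _ fun e he => ?_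
  rw [Finset.mem_filter] at he
  exact ⟨hS he.1, he.2 ▸ hg e he.1⟩
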